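/- The optimal value of the linear relaxation of the Steiner single-commodity-flow formulation (SCFS) is at most the optimal value of the linear relaxation of the standard single-commodity-flow TSP formulation (SCF): for every feasible fractional solution (x', y') of SCF, the pair (proj(x'), proj(y')) is feasible for the relaxation of SCFS with equal objective value; hence z*_{LP}(SCFS) ≤ z*_{LP}(SCF). -/

import Mathlib

/-- The list of consecutive steps (arcs) of a path given as a list of vertices. -/
def walkSteps {V : Type*} (w : List V) : List (V × V) := w.zip w.tail

/-- Total weight of a path. -/
def pathLength {V : Type*} (d : V → V → ℝ) (w : List V) : ℝ :=
  ((walkSteps w).map (fun p => d p.1 p.2)).sum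

/-- The shortest-path averaging projection. -/
noncomputable def proj {V : Type*} [DecidableEq V] (R : Finset V)
    (P : V → V → Finset (List V)) (x' : V → V → ℝ) (u v : V) : ℝ :=
  ∑ i ∈ R, ∑ j ∈ R,
    (((P i j).filter (fun p => (u, v) ∈ walkSteps p)).card : ℝ) * x' i j / ((P i j).card : ℝ)

/-- Feasibility for the linear relaxation of the standard single-commodity-flow TSP
formulation (SCF) on the complete directed graph over the required set `R`. -/
def SCFFeasible {V : Type*} [DecidableEq V] (R : Finset V) (depot : V) (n : ℕ)
    (x' y' : V → V → ℝ) : Prop :=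
  (∀ i ∈ R, ∑ j ∈ R.erase i, x' i j = 1) ∧
  (∀ i ∈ R, ∑ j ∈ R.erase i, x' j i = 1) ∧
  (∀ i ∈ R.erase depot, ∑ j ∈ R.erase i, y' j i - ∑ j ∈ R.erase i, y' i j = 1) ∧
  (∀ i ∈ R, ∀ j ∈ R, y' i j ≤ (n : ℝ) * x' i j) ∧
  (∀ i j, 0 ≤ x' i j) ∧ (∀ i j, 0 ≤ y' i j)

/-- Feasibility for the linear relaxation of the Steiner single-commodity-flow
formulation (SCFS) on the sparse directed graph `D = (V, A)`. -/
def SCFSFeasible {V : Type*} [Fintype V] [DecidableEq V] (A : V → V → Prop)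
    (R : Finset V) (depot : V) (n : ℕ) (x y : V → V → ℝ) : Prop :=
  (∀ u v, ¬ A u v → x u v = 0) ∧
  (∀ u v, ¬ A u v → y u v = 0) ∧
  (∀ i ∈ R, 1 ≤ ∑ j, x i j) ∧
  (∀ i : V, ∑ j, x i j = ∑ j, x j i) ∧
  (∀ i ∈ R.erase depot, ∑ j, y j i - ∑ j, y i j = 1) ∧
  (∀ i : V, i ∉ R → ∑ j, y j i - ∑ j, y i j = 0) ∧
  (∀ u v, y u v ≤ (n : ℝ) * x u v) ∧
  (∀ u v, 0 ≤ x u v) ∧ (∀ u v, 0 ≤ y u v)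

section Aux
variable {V : Type*}

lemma walkSteps_nil : walkSteps ([] : List V) = [] := rfl
lemma walkSteps_single (x : V) : walkSteps [x] = [] := rfl
lemma walkSteps_cons_cons (x y : V) (t : List V) :
    walkSteps (x :: y :: t) = (x, y) :: walkSteps (y :: t) := rfl

lemma walkSteps_nodup (p : List V) (hp : p.Nodup) : (walkSteps p).Nodup := by
  induction p with
  | nil => simp [walkSteps]
  | cons x rest ih =>
    cases rest with
    | nil => simp [walkSteps]
    | cons y t =>
      rw [walkSteps_cons_cons]
      refine List.nodup_cons.mpr ⟨?_, ih (List.nodup_cons.mp hp).2⟩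
      intro hmem
      have hx : x ∈ y :: t := (List.of_mem_zip hmem).1
      exact (List.nodup_cons.mp hp).1 hx

lemma netFlow [DecidableEq V] (i : V) (p : List V) :
    ∀ a b : V, p.head? = some a → p.getLast? = some b →
    ((walkSteps p).map (fun q : V × V => if q.2 = i then (1:ℝ) else 0)).sum
      - ((walkSteps p).map (fun q : V × V => if q.1 = i then (1:ℝ) else 0)).sum
    = (if b = i then (1:ℝ) else 0) - (if a = i then (1:ℝ) else 0) := by
  induction p with
  | nil => intro a b h; simp at h
  | cons x rest ih =>
    intro a b ha hb
    simp only [List.head?_cons, Option.some_inj] at ha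
    subst ha
    cases rest with
    | nil =>
      simp only [List.getLast?_singleton, Option.some_inj] at hb
      subst hb
      simp [walkSteps_single]
    | cons y t =>
      have hb' : (y :: t).getLast? = some b := by
        rwa [List.getLast?_cons_cons] at hb
      have h := ih y b rfl hb'
      simp only [walkSteps_cons_cons, List.map_cons, List.sum_cons]
      linarith

lemma exists_first_step (p : List V) (a b : V) (ha : p.head? = some a)
    (hb : p.getLast? = some b) (hab : a ≠ b) : ∃ j, (a, j) ∈ walkSteps p := by
  cases p with
  | nil => simp at ha
  | cons x rest =>
    simp only [List.head?_cons, Option.some_inj] at ha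
    subst ha
    cases rest with
    | nil =>
      simp only [List.getLast?_singleton, Option.some_inj] at hb
      exact absurd hb hab
    | cons y t =>
      exact ⟨y, by rw [walkSteps_cons_cons]; exact List.mem_cons_self⟩

lemma sum_sum_ite_mem [Fintype V] [DecidableEq V] (l : List (V × V)) (hl : l.Nodup)
    (h : V → V → ℝ) :
    ∑ u : V, ∑ v : V, (if (u, v) ∈ l then h u v else 0) = (l.map fun q => h q.1 q.2).sum := by
  induction l with
  | nil => simp
  | cons q t ih =>
    have hq : q ∉ t := (List.nodup_cons.mp hl).1
    have ht := (List.nodup_cons.mp hl).2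
    have hsplit : ∀ u v, (if (u, v) ∈ q :: t then h u v else 0)
        = (if (u, v) = q then h u v else 0) + (if (u, v) ∈ t then h u v else 0) := by
      intro u v
      by_cases h1 : (u, v) = q
      · subst h1; simp [hq]
      · simp [h1, List.mem_cons]
    simp only [hsplit, Finset.sum_add_distrib]
    rw [ih ht]
    simp only [List.map_cons, List.sum_cons]
    congr 1
    simp [Prod.ext_iff, ite_and, Finset.sum_ite_eq']

lemma sum_ind_fst [Fintype V] [DecidableEq V] (i : V) (f : V → V → ℝ) :
    ∑ u : V, ∑ v : V, (if u = i then (1:ℝ) else 0) * f u v = ∑ v : V, f i v := by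
  have h : ∀ u : V, ∑ v : V, (if u = i then (1:ℝ) else 0) * f u v
      = if u = i then ∑ v : V, f u v else 0 := by
    intro u; split <;> simp
  rw [Finset.sum_congr rfl fun u _ => h u]
  simp [Finset.sum_ite_eq']

lemma sum_ind_snd [Fintype V] [DecidableEq V] (i : V) (f : V → V → ℝ) :
    ∑ u : V, ∑ v : V, (if v = i then (1:ℝ) else 0) * f u v = ∑ u : V, f u i := by
  refine Finset.sum_congr rfl fun u _ => ?_
  have h : ∀ v : V, (if v = i then (1:ℝ) else 0) * f u v
      = if v = i then f u v else 0 := by intro v; split <;> simp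
  rw [Finset.sum_congr rfl fun v _ => h v]
  simp [Finset.sum_ite_eq']

lemma proj_eq_sum [DecidableEq V] (R : Finset V) (P : V → V → Finset (List V))
    (z : V → V → ℝ) (u v : V) :
    proj R P z u v = ∑ i ∈ R, ∑ j ∈ R, ∑ p ∈ P i j,
      (if (u, v) ∈ walkSteps p then z i j / ((P i j).card : ℝ) else 0) := by
  unfold proj
  refine Finset.sum_congr rfl fun i _ => Finset.sum_congr rfl fun j _ => ?_
  rw [Finset.sum_ite, Finset.sum_const, Finset.sum_const, smul_zero, add_zero,
    nsmul_eq_mul, mul_div_assoc]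

lemma sum_swap_out {ι : Type*} [Fintype V] (s : Finset ι) (F : V → V → ι → ℝ) :
    ∑ u : V, ∑ v : V, ∑ i ∈ s, F u v i = ∑ i ∈ s, ∑ u : V, ∑ v : V, F u v i := by
  rw [show (∑ u : V, ∑ v : V, ∑ i ∈ s, F u v i) = ∑ u : V, ∑ i ∈ s, ∑ v : V, F u v i from
    Finset.sum_congr rfl fun u _ => Finset.sum_comm, Finset.sum_comm]

lemma master [Fintype V] [DecidableEq V] (R : Finset V) (P : V → V → Finset (List V))
    (hnd : ∀ i ∈ R, ∀ j ∈ R, ∀ p ∈ P i j, (walkSteps p).Nodup)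
    (z : V → V → ℝ) (g : V → V → ℝ) :
    ∑ u : V, ∑ v : V, g u v * proj R P z u v
      = ∑ i ∈ R, ∑ j ∈ R, (∑ p ∈ P i j, ((walkSteps p).map fun q => g q.1 q.2).sum)
          * (z i j / ((P i j).card : ℝ)) := by
  have h1 : ∑ u : V, ∑ v : V, g u v * proj R P z u v
      = ∑ u : V, ∑ v : V, ∑ i ∈ R, ∑ j ∈ R, ∑ p ∈ P i j,
          (if (u, v) ∈ walkSteps p then g u v * (z i j / ((P i j).card : ℝ)) else 0) := by
    refine Finset.sum_congr rfl fun u _ => Finset.sum_congr rfl fun v _ => ?_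
    rw [proj_eq_sum, Finset.mul_sum]
    refine Finset.sum_congr rfl fun i _ => ?_
    rw [Finset.mul_sum]
    refine Finset.sum_congr rfl fun j _ => ?_
    rw [Finset.mul_sum]
    refine Finset.sum_congr rfl fun p _ => ?_
    rw [mul_ite, mul_zero]
  rw [h1, sum_swap_out]
  refine Finset.sum_congr rfl fun i hi => ?_
  rw [sum_swap_out]
  refine Finset.sum_congr rfl fun j hj => ?_
  rw [sum_swap_out, Finset.sum_mul]
  refine Finset.sum_congr rfl fun p hp => ?_
  rw [sum_sum_ite_mem _ (hnd i hi j hj p hp) (fun u v => g u v * (z i j / ((P i j).card : ℝ)))]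
  rw [← List.sum_map_mul_right]

end Aux

/-- Every feasible fractional solution `(x', y')` of SCF projects to a feasible
fractional solution `(proj x', proj y')` of SCFS with equal objective value; hence the
optimal value of the SCFS linear relaxation is at most that of the SCF relaxation. -/
theorem scfs_relaxation_le_scf_relaxation
    {V : Type*} [Fintype V] [DecidableEq V]
    (A : V → V → Prop) (R : Finset V) (depot : V) (hdep : depot ∈ R)
    (n : ℕ) (hn : n = R.card - 1)
    (d : V → V → ℝ) (hd : ∀ u v, 0 ≤ d u v)
    (dist : V → V → ℝ) (hdist : ∀ i j, 0 ≤ dist i j)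
    (P : V → V → Finset (List V))
    (hP : ∀ i ∈ R, ∀ j ∈ R, ∀ p ∈ P i j,
      p.head? = some i ∧ p.getLast? = some j ∧ p.Nodup ∧
      (∀ q ∈ walkSteps p, A q.1 q.2) ∧ pathLength d p = dist i j)
    (hPne : ∀ i ∈ R, ∀ j ∈ R, (P i j).Nonempty) :
    (∀ x' y', SCFFeasible R depot n x' y' →
      SCFSFeasible A R depot n (proj R P x') (proj R P y') ∧
      ∑ u, ∑ v, d u v * proj R P x' u v = ∑ i ∈ R, ∑ j ∈ R, dist i j * x' i j)
    ∧
    ((∃ x' y', SCFFeasible R depot n x' y') →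
      sInf {c : ℝ | ∃ x y, SCFSFeasible A R depot n x y ∧ c = ∑ u, ∑ v, d u v * x u v}
        ≤ sInf {c : ℝ | ∃ x' y', SCFFeasible R depot n x' y' ∧
            c = ∑ i ∈ R, ∑ j ∈ R, dist i j * x' i j}) := by
  have hnd : ∀ i ∈ R, ∀ j ∈ R, ∀ p ∈ P i j, (walkSteps p).Nodup :=
    fun i hi j hj p hp => walkSteps_nodup p (hP i hi j hj p hp).2.2.1
  have hcpos : ∀ i ∈ R, ∀ j ∈ R, (0:ℝ) < ((P i j).card : ℝ) := by
    intro i hi j hj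
    exact_mod_cast Finset.card_pos.mpr (hPne i hi j hj)
  -- support lemma
  have hsupp : ∀ z : V → V → ℝ, ∀ u v, ¬ A u v → proj R P z u v = 0 := by
    intro z u v hA
    unfold proj
    refine Finset.sum_eq_zero fun i hi => Finset.sum_eq_zero fun j hj => ?_
    have hfe : (P i j).filter (fun p => (u, v) ∈ walkSteps p) = ∅ := by
      refine Finset.filter_eq_empty_iff.mpr fun {p} hp hmem => hA ?_
      exact (hP i hi j hj p hp).2.2.2.1 (u, v) hmem
    rw [hfe]; simp
  -- nonnegativity lemma
  have hnonneg : ∀ z : V → V → ℝ, (∀ i j, 0 ≤ z i j) → ∀ u v, 0 ≤ proj R P z u v := by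
    intro z hz u v
    unfold proj
    refine Finset.sum_nonneg fun i _ => Finset.sum_nonneg fun j _ => ?_
    have := hz i j
    positivity
  -- net flow lemma
  have hflow : ∀ z : V → V → ℝ, ∀ i : V,
      (∑ j, proj R P z j i) - ∑ j, proj R P z i j
        = (if i ∈ R then (∑ a ∈ R, z a i) - ∑ b ∈ R, z i b else 0) := by
    intro z i
    have hmIn := master R P hnd z (fun u v => if v = i then (1:ℝ) else 0)
    have hmOut := master R P hnd z (fun u v => if u = i then (1:ℝ) else 0)
    rw [sum_ind_snd] at hmIn
    rw [sum_ind_fst] at hmOut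
    rw [hmIn, hmOut]
    rw [← Finset.sum_sub_distrib]
    have hterm : ∀ a ∈ R, ∀ b ∈ R,
        ((∑ p ∈ P a b, ((walkSteps p).map fun q => if q.2 = i then (1:ℝ) else 0).sum)
            * (z a b / ((P a b).card : ℝ)))
          - ((∑ p ∈ P a b, ((walkSteps p).map fun q => if q.1 = i then (1:ℝ) else 0).sum)
            * (z a b / ((P a b).card : ℝ)))
        = (if b = i then z a b else 0) - (if a = i then z a b else 0) := by
      intro a ha b hb
      rw [← sub_mul, ← Finset.sum_sub_distrib]
      have hnf : ∀ p ∈ P a b,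
          ((walkSteps p).map fun q => if q.2 = i then (1:ℝ) else 0).sum
            - ((walkSteps p).map fun q => if q.1 = i then (1:ℝ) else 0).sum
          = (if b = i then (1:ℝ) else 0) - (if a = i then (1:ℝ) else 0) := by
        intro p hp
        exact netFlow i p a b (hP a ha b hb p hp).1 (hP a ha b hb p hp).2.1
      rw [Finset.sum_congr rfl hnf, Finset.sum_const, nsmul_eq_mul]
      have hc := hcpos a ha b hb
      have hc0 : ((P a b).card : ℝ) ≠ 0 := ne_of_gt hc
      field_simp
      split <;> split <;> subst_vars <;> ring
    have h2 : (∑ a ∈ R,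
        ((∑ b ∈ R,
            (∑ p ∈ P a b, ((walkSteps p).map fun q => if q.2 = i then (1:ℝ) else 0).sum)
              * (z a b / ((P a b).card : ℝ)))
          - ∑ b ∈ R,
            (∑ p ∈ P a b, ((walkSteps p).map fun q => if q.1 = i then (1:ℝ) else 0).sum)
              * (z a b / ((P a b).card : ℝ))))
        = ∑ a ∈ R, ∑ b ∈ R,
            ((if b = i then z a b else 0) - (if a = i then z a b else 0)) := by
      refine Finset.sum_congr rfl fun a ha => ?_
      rw [← Finset.sum_sub_distrib]
      exact Finset.sum_congr rfl fun b hb => hterm a ha b hb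
    rw [h2]
    simp only [Finset.sum_sub_distrib, Finset.sum_ite_eq']
    by_cases hi : i ∈ R
    · simp [hi, Finset.sum_ite_eq']
    · simp [hi]
  -- the main projection claim
  have main : ∀ x' y', SCFFeasible R depot n x' y' →
      SCFSFeasible A R depot n (proj R P x') (proj R P y') ∧
      ∑ u, ∑ v, d u v * proj R P x' u v = ∑ i ∈ R, ∑ j ∈ R, dist i j * x' i j := by
    intro x' y' hxy
    obtain ⟨hx1, hx2, hy3, hyx, hx0, hy0⟩ := hxy
    -- degree constraint
    have hdeg : ∀ i ∈ R, 1 ≤ ∑ j, proj R P x' i j := by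
      intro i hi
      have hm := master R P hnd x' (fun u v => if u = i then (1:ℝ) else 0)
      rw [sum_ind_fst] at hm
      rw [show (∑ j, proj R P x' i j) = ∑ v, proj R P x' i v from rfl, hm]
      have hT0 : ∀ a ∈ R, ∀ b ∈ R, 0 ≤
          (∑ p ∈ P a b, ((walkSteps p).map fun q => if q.1 = i then (1:ℝ) else 0).sum)
            * (x' a b / ((P a b).card : ℝ)) := by
        intro a ha b hb
        refine mul_nonneg (Finset.sum_nonneg fun p _ => List.sum_nonneg ?_)
          (div_nonneg (hx0 a b) (by positivity))
        intro r hr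
        obtain ⟨q, _, rfl⟩ := List.mem_map.mp hr
        split <;> norm_num
      have key : ∀ b ∈ R.erase i, x' i b ≤
          (∑ p ∈ P i b, ((walkSteps p).map fun q => if q.1 = i then (1:ℝ) else 0).sum)
            * (x' i b / ((P i b).card : ℝ)) := by
        intro b hb
        have hbR := Finset.mem_of_mem_erase hb
        have hbne : b ≠ i := Finset.ne_of_mem_erase hb
        have hOut : ∀ p ∈ P i b, (1:ℝ) ≤
            ((walkSteps p).map fun q => if q.1 = i then (1:ℝ) else 0).sum := by
          intro p hp
          obtain ⟨hh, hl, _, _, _⟩ := hP i hi b hbR p hp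
          obtain ⟨j0, hj0⟩ := exists_first_step p i b hh hl (fun h => hbne h.symm)
          refine List.single_le_sum ?_ (1:ℝ) ?_
          · intro r hr
            obtain ⟨q, _, rfl⟩ := List.mem_map.mp hr
            split <;> norm_num
          · exact List.mem_map.mpr ⟨(i, j0), hj0, by simp⟩
        have hc := hcpos i hi b hbR
        have h2 : ((P i b).card : ℝ) ≤
            ∑ p ∈ P i b, ((walkSteps p).map fun q => if q.1 = i then (1:ℝ) else 0).sum := by
          calc ((P i b).card : ℝ) = ∑ _p ∈ P i b, (1:ℝ) := by simp
            _ ≤ _ := Finset.sum_le_sum hOut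
        calc x' i b = ((P i b).card : ℝ) * (x' i b / ((P i b).card : ℝ)) := by
              field_simp
          _ ≤ _ := mul_le_mul_of_nonneg_right h2
              (div_nonneg (hx0 i b) (le_of_lt hc))
      calc (1:ℝ) = ∑ b ∈ R.erase i, x' i b := (hx1 i hi).symm
        _ ≤ ∑ b ∈ R.erase i,
            (∑ p ∈ P i b, ((walkSteps p).map fun q => if q.1 = i then (1:ℝ) else 0).sum)
              * (x' i b / ((P i b).card : ℝ)) := Finset.sum_le_sum key
        _ ≤ ∑ b ∈ R,
            (∑ p ∈ P i b, ((walkSteps p).map fun q => if q.1 = i then (1:ℝ) else 0).sum)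
              * (x' i b / ((P i b).card : ℝ)) :=
            Finset.sum_le_sum_of_subset_of_nonneg (Finset.erase_subset i R)
              (fun b hbR _ => hT0 i hi b hbR)
        _ ≤ ∑ a ∈ R, ∑ b ∈ R,
            (∑ p ∈ P a b, ((walkSteps p).map fun q => if q.1 = i then (1:ℝ) else 0).sum)
              * (x' a b / ((P a b).card : ℝ)) :=
            Finset.single_le_sum
              (f := fun a => ∑ b ∈ R,
                (∑ p ∈ P a b, ((walkSteps p).map fun q => if q.1 = i then (1:ℝ) else 0).sum)
                  * (x' a b / ((P a b).card : ℝ)))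
              (fun a ha => Finset.sum_nonneg fun b hb => hT0 a ha b hb) hi
    -- conservation for x
    have hcons : ∀ i : V, ∑ j, proj R P x' i j = ∑ j, proj R P x' j i := by
      intro i
      have h := hflow x' i
      by_cases hi : i ∈ R
      · rw [if_pos hi] at h
        rw [← Finset.add_sum_erase R (fun a => x' a i) hi,
          ← Finset.add_sum_erase R (fun b => x' i b) hi, hx1 i hi, hx2 i hi] at h
        linarith
      · rw [if_neg hi] at h
        linarith
    -- flow for y at required vertices
    have hyflow : ∀ i ∈ R.erase depot,
        (∑ j, proj R P y' j i) - ∑ j, proj R P y' i j = 1 := by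
      intro i hi
      have hiR := Finset.mem_of_mem_erase hi
      have h := hflow y' i
      rw [if_pos hiR, ← Finset.add_sum_erase R (fun a => y' a i) hiR,
        ← Finset.add_sum_erase R (fun b => y' i b) hiR] at h
      have := hy3 i hi
      linarith
    -- flow for y at Steiner vertices
    have hyflow0 : ∀ i : V, i ∉ R →
        (∑ j, proj R P y' j i) - ∑ j, proj R P y' i j = 0 := by
      intro i hi
      have h := hflow y' i
      rw [if_neg hi] at h
      linarith
    -- capacity
    have hcap : ∀ u v, proj R P y' u v ≤ (n : ℝ) * proj R P x' u v := by
      intro u v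
      unfold proj
      rw [Finset.mul_sum]
      refine Finset.sum_le_sum fun i hi => ?_
      rw [Finset.mul_sum]
      refine Finset.sum_le_sum fun j hj => ?_
      have h1 : y' i j ≤ (n : ℝ) * x' i j := hyx i hi j hj
      have hf : (0:ℝ) ≤ (((P i j).filter (fun p => (u, v) ∈ walkSteps p)).card : ℝ)
          / ((P i j).card : ℝ) := by positivity
      calc (((P i j).filter (fun p => (u, v) ∈ walkSteps p)).card : ℝ) * y' i j
            / ((P i j).card : ℝ)
          = ((((P i j).filter (fun p => (u, v) ∈ walkSteps p)).card : ℝ)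
              / ((P i j).card : ℝ)) * y' i j := by ring
        _ ≤ ((((P i j).filter (fun p => (u, v) ∈ walkSteps p)).card : ℝ)
              / ((P i j).card : ℝ)) * ((n : ℝ) * x' i j) :=
            mul_le_mul_of_nonneg_left h1 hf
        _ = (n : ℝ) * ((((P i j).filter (fun p => (u, v) ∈ walkSteps p)).card : ℝ)
              * x' i j / ((P i j).card : ℝ)) := by ring
    -- objective
    have hobj : ∑ u, ∑ v, d u v * proj R P x' u v
        = ∑ i ∈ R, ∑ j ∈ R, dist i j * x' i j := by
      rw [master R P hnd x' d]
      refine Finset.sum_congr rfl fun i hi => Finset.sum_congr rfl fun j hj => ?_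
      have hlen : ∀ p ∈ P i j, ((walkSteps p).map fun q => d q.1 q.2).sum = dist i j :=
        fun p hp => (hP i hi j hj p hp).2.2.2.2
      rw [Finset.sum_congr rfl hlen, Finset.sum_const, nsmul_eq_mul]
      have hc0 : ((P i j).card : ℝ) ≠ 0 := ne_of_gt (hcpos i hi j hj)
      field_simp
    exact ⟨⟨hsupp x', hsupp y', hdeg, hcons, hyflow, hyflow0, hcap,
      hnonneg x' hx0, hnonneg y' hy0⟩, hobj⟩
  refine ⟨main, ?_⟩
  rintro ⟨x', y', hxy⟩
  refine csInf_le_csInf ?_ ⟨_, x', y', hxy, rfl⟩ ?_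
  · refine ⟨0, fun c hc => ?_⟩
    obtain ⟨x, y, hfeas, rfl⟩ := hc
    exact Finset.sum_nonneg fun u _ => Finset.sum_nonneg fun v _ =>
      mul_nonneg (hd u v) (hfeas.2.2.2.2.2.2.2.1 u v)
  · rintro c ⟨x'', y'', h, rfl⟩
    exact ⟨proj R P x'', proj R P y'', (main x'' y'' h).1, ((main x'' y'' h).2).symm⟩
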